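/- Let ε ∈ (0,1], t ≥ 1 an integer, κ > 0, and let w₁, …, w_t be nonnegative reals satisfying Σ_{s=1}^t min{1, w_s²} ≤ 2κ. Then Σ_{s=1}^t (w_s/√(1 + w_s²))^{1+ε} · s^{−(1−ε)/2} ≤ (2κ)^{(1+ε)/2} · (log(3t))^{(1−ε)/2}. -/

import Mathlib

lemma key_wbound (x : ℝ) (hx : 0 ≤ x) :
    (x / Real.sqrt (1 + x ^ 2)) ^ (2:ℝ) ≤ min 1 (x ^ 2) := by
  have hd : (0:ℝ) < 1 + x ^ 2 := by positivity
  have hs : Real.sqrt (1 + x ^ 2) ^ 2 = 1 + x ^ 2 := Real.sq_sqrt hd.le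
  rw [Real.rpow_two, div_pow, hs]
  refine le_min ?_ ?_
  · rw [div_le_one hd]; nlinarith
  · rw [div_le_iff₀ hd]; nlinarith

lemma harmonic_log (t : ℕ) (ht : 1 ≤ t) :
    ∑ s ∈ Finset.Icc 1 t, (s : ℝ) ^ (-1 : ℝ) ≤ Real.log (3 * t) := by
  have h1 : ∑ s ∈ Finset.Icc 1 t, (s : ℝ) ^ (-1 : ℝ) = (harmonic t : ℝ) := by
    rw [harmonic_eq_sum_Icc]
    push_cast
    exact Finset.sum_congr rfl fun s hs => Real.rpow_neg_one _
  have h2 := harmonic_le_one_add_log t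
  have h3 : Real.log (3 * t) = Real.log 3 + Real.log t := by
    rw [Real.log_mul (by norm_num) (by exact_mod_cast Nat.one_le_iff_ne_zero.mp ht)]
  have h4 : (1:ℝ) ≤ Real.log 3 := by
    rw [Real.le_log_iff_exp_le (by norm_num)]
    have := Real.exp_one_lt_d9
    linarith
  rw [h1, h3]; linarith

theorem holder_weight_sum (ε : ℝ) (hε : ε ∈ Set.Ioc (0 : ℝ) 1) (t : ℕ) (ht : 1 ≤ t)
    (κ : ℝ) (hκ : 0 < κ) (w : ℕ → ℝ) (hw : ∀ s, 0 ≤ w s)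
    (hsum : ∑ s ∈ Finset.Icc 1 t, min 1 (w s ^ 2) ≤ 2 * κ) :
    ∑ s ∈ Finset.Icc 1 t, (w s / Real.sqrt (1 + w s ^ 2)) ^ (1 + ε) * (s : ℝ) ^ (-(1 - ε) / 2) ≤
      (2 * κ) ^ ((1 + ε) / 2) * (Real.log (3 * t)) ^ ((1 - ε) / 2) := by
  obtain ⟨hε0, hε1⟩ := hε
  have hlog : 0 ≤ Real.log (3 * t) := by
    apply Real.log_nonneg
    have : (1:ℝ) ≤ (t:ℝ) := by exact_mod_cast ht
    nlinarith
  rcases eq_or_lt_of_le hε1 with he | he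
  · -- ε = 1
    subst he
    rw [show (-((1:ℝ)-1)/2) = 0 from by norm_num, show ((1:ℝ)-1)/2 = 0 from by norm_num,
      show ((1:ℝ)+1)/2 = 1 from by norm_num, show ((1:ℝ)+1) = 2 from by norm_num,
      Real.rpow_one, Real.rpow_zero, mul_one]
    simp only [Real.rpow_zero, mul_one]
    calc ∑ s ∈ Finset.Icc 1 t, (w s / Real.sqrt (1 + w s ^ 2)) ^ (2:ℝ)
        ≤ ∑ s ∈ Finset.Icc 1 t, min 1 (w s ^ 2) :=
          Finset.sum_le_sum fun s _ => key_wbound (w s) (hw s)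
      _ ≤ 2 * κ := hsum
  · -- ε < 1
    set p : ℝ := 2 / (1 + ε) with hp
    set q : ℝ := 2 / (1 - ε) with hq
    have hε1' : 0 < 1 - ε := by linarith
    have hεp : 0 < 1 + ε := by linarith
    have hpq : p.HolderConjugate q := by
      rw [Real.holderConjugate_iff]; constructor
      · rw [hp, lt_div_iff₀ hεp]; linarith
      · rw [hp, hq, inv_div, inv_div]; ring
    have hH := Real.inner_le_Lp_mul_Lq_of_nonneg (s := Finset.Icc 1 t)
      (f := fun s => (w s / Real.sqrt (1 + w s ^ 2)) ^ (1 + ε))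
      (g := fun s => (s : ℝ) ^ (-(1 - ε) / 2)) hpq
      (fun i _ => Real.rpow_nonneg (div_nonneg (hw i) (Real.sqrt_nonneg _)) _)
      (fun i _ => Real.rpow_nonneg (Nat.cast_nonneg i) _)
    have hfp : ∀ s : ℕ, ((w s / Real.sqrt (1 + w s ^ 2)) ^ (1 + ε)) ^ p
        = (w s / Real.sqrt (1 + w s ^ 2)) ^ (2:ℝ) := by
      intro s
      rw [← Real.rpow_mul (div_nonneg (hw s) (Real.sqrt_nonneg _)), hp]
      congr 1
      field_simp
    have hgq : ∀ s : ℕ, ((s:ℝ) ^ (-(1 - ε) / 2)) ^ q = (s:ℝ) ^ (-1:ℝ) := by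
      intro s
      rw [← Real.rpow_mul (Nat.cast_nonneg s), hq]
      congr 1
      field_simp
    have hip : 1 / p = (1 + ε) / 2 := by rw [hp]; field_simp
    have hiq : 1 / q = (1 - ε) / 2 := by rw [hq]; field_simp
    simp only [hfp, hgq, hip, hiq] at hH
    refine hH.trans (mul_le_mul ?_ ?_
      (Real.rpow_nonneg (Finset.sum_nonneg fun i _ => Real.rpow_nonneg (Nat.cast_nonneg i) _) _)
      (by positivity))
    · apply Real.rpow_le_rpow (Finset.sum_nonneg fun i _ => Real.rpow_nonneg (div_nonneg (hw i) (Real.sqrt_nonneg _)) _)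
      · exact le_trans (Finset.sum_le_sum fun s _ => key_wbound (w s) (hw s)) hsum
      · positivity

    · exact Real.rpow_le_rpow
        (Finset.sum_nonneg fun i _ => Real.rpow_nonneg (Nat.cast_nonneg i) _)
        (harmonic_log t ht) (by positivity)
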